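/- arXiv:2302.05535 — 3 statements merged into one kernel-verified Lean document; each statement's English description precedes it below -/
import Mathlib

section
/- Let A be a bounded operator on a Hilbert space and ζ₀ a point with |ζ₀'| = 1 such that the closed half-plane Π₀ = { z : Im(ζ₀'(conj(ζ₀) − conj(z))) ≥ 0 } contains W(A). Then the operator μ(ζ₀, ζ₀', A) = (1/(2πi)) [ (ζ₀ I − A)^{-1} ζ₀' − (conj(ζ₀) I − A*)^{-1} conj(ζ₀') ] is positive semidefinite. -/
open scoped InnerProductSpace ComplexConjugate

/-- Let A be a bounded operator on a complex Hilbert space and ζ₀ a point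
off the spectrum of A, ζ₀' a unit complex number, such that the closed half-plane
Π₀ = { z : Im(ζ₀'(conj ζ₀ − conj z)) ≥ 0 } contains the closure of W(A).  Then
μ(ζ₀, ζ₀', A) = (1/(2πi)) [ ζ₀' (ζ₀ I − A)⁻¹ − conj(ζ₀') (conj(ζ₀) I − A*)⁻¹ ]
is positive semidefinite. -/
theorem mu_positive_semidefinite {H : Type*} [NormedAddCommGroup H]
    [InnerProductSpace ℂ H] [CompleteSpace H] (A : H →L[ℂ] H)
    (ζ₀ ζ₀' : ℂ) (hunit : ‖ζ₀'‖ = 1) (hζ₀ : ζ₀ ∉ spectrum ℂ A)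
    (hW : closure {z : ℂ | ∃ q : H, ‖q‖ = 1 ∧ z = ⟪q, A q⟫_ℂ} ⊆
      {z : ℂ | 0 ≤ (ζ₀' * (conj ζ₀ - conj z)).im}) :
    ∀ v : H,
      0 ≤ (⟪((1 / (2 * Real.pi * Complex.I)) •
            (ζ₀' • Ring.inverse (ζ₀ • (1 : H →L[ℂ] H) - A) -
             conj ζ₀' • Ring.inverse (conj ζ₀ • (1 : H →L[ℂ] H) -
               ContinuousLinearMap.adjoint A))) v, v⟫_ℂ).re ∧
      (⟪((1 / (2 * Real.pi * Complex.I)) •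
            (ζ₀' • Ring.inverse (ζ₀ • (1 : H →L[ℂ] H) - A) -
             conj ζ₀' • Ring.inverse (conj ζ₀ • (1 : H →L[ℂ] H) -
               ContinuousLinearMap.adjoint A))) v, v⟫_ℂ).im = 0 := by
  intro v
  set T : H →L[ℂ] H := ζ₀ • (1 : H →L[ℂ] H) - A with hTdef
  have hT : IsUnit T := by
    rw [spectrum.mem_iff, not_not] at hζ₀
    simpa [hTdef, Algebra.algebraMap_eq_smul_one] using hζ₀
  set R : H →L[ℂ] H := Ring.inverse T with hRdef
  -- second resolvent is star of the first
  have hstarT : conj ζ₀ • (1 : H →L[ℂ] H) - ContinuousLinearMap.adjoint A = star T := by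
    simp [hTdef, star_sub, star_smul, ContinuousLinearMap.star_eq_adjoint]
  have hstarR : Ring.inverse (conj ζ₀ • (1 : H →L[ℂ] H) - ContinuousLinearMap.adjoint A)
      = star R := by rw [hstarT, Ring.inverse_star]
  set B : H →L[ℂ] H := ζ₀' • R with hBdef
  have hD : ζ₀' • R - conj ζ₀' • Ring.inverse (conj ζ₀ • (1 : H →L[ℂ] H) -
      ContinuousLinearMap.adjoint A) = B - star B := by
    rw [hstarR, hBdef, star_smul]; rfl
  set s : ℂ := ⟪B v, v⟫_ℂ with hsdef
  -- compute the inner product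
  have hμ : ⟪((1 / (2 * Real.pi * Complex.I)) •
        (ζ₀' • R - conj ζ₀' • Ring.inverse (conj ζ₀ • (1 : H →L[ℂ] H) -
          ContinuousLinearMap.adjoint A))) v, v⟫_ℂ = ((-s.im / Real.pi : ℝ) : ℂ) := by
    rw [hD]
    have h1 : ((B - star B) v : H) = B v - (star B) v := rfl
    rw [ContinuousLinearMap.smul_apply, inner_smul_left, h1, inner_sub_left]
    have h2 : ⟪(star B) v, v⟫_ℂ = conj s := by
      rw [ContinuousLinearMap.star_eq_adjoint, ContinuousLinearMap.adjoint_inner_left,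
        ← inner_conj_symm]
    rw [h2, ← hsdef, Complex.sub_conj]
    have hπ : (Real.pi : ℂ) ≠ 0 := by exact_mod_cast Real.pi_ne_zero
    field_simp [map_div₀, Complex.ext_iff]
    ring_nf
    simp only [map_mul, map_inv₀, Complex.conj_I, Complex.conj_ofReal, map_one, map_div₀, map_ofNat]
    push_cast
    field_simp
  rw [hμ]
  -- now need s.im ≤ 0
  have hsim : s.im ≤ 0 := by
    set w : H := R v with hwdef
    have hv : T w = v := by
      have : (T * R) v = v := by rw [Ring.mul_inverse_cancel T hT]; rfl
      simpa [hwdef] using this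
    have h3 : ⟪R v, v⟫_ℂ = ⟪w, T w⟫_ℂ := by rw [hv]
    have hs : s = conj ζ₀' * (ζ₀ * (‖w‖ : ℂ)^2 - ⟪w, A w⟫_ℂ) := by
      rw [hsdef, hBdef, ContinuousLinearMap.smul_apply, inner_smul_left, h3]
      have hTw : (T w : H) = ζ₀ • w - A w := by simp [hTdef]
      rw [hTw, inner_sub_right, inner_smul_right, inner_self_eq_norm_sq_to_K]
      norm_num
    rcases eq_or_ne w 0 with hw | hw
    · simp [hs, hw]
    · set q : H := (‖w‖ : ℂ)⁻¹ • w with hqdef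
      have hwn : (‖w‖ : ℂ) ≠ 0 := by
        exact_mod_cast (norm_ne_zero_iff.mpr hw)
      have hq : ‖q‖ = 1 := by
        rw [hqdef, norm_smul]
        simp [norm_ne_zero_iff.mpr hw]
      set z : ℂ := ⟪q, A q⟫_ℂ with hzdef
      have hwAw : ⟪w, A w⟫_ℂ = (‖w‖ : ℂ)^2 * z := by
        have hwq : w = (‖w‖ : ℂ) • q := by
          rw [hqdef, smul_smul, mul_inv_cancel₀ hwn, one_smul]
        conv_lhs => rw [hwq]
        rw [map_smul, inner_smul_left, inner_smul_right, hzdef]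
        have : conj (‖w‖ : ℂ) = (‖w‖ : ℂ) := Complex.conj_ofReal _
        rw [this]; ring
      have hz : 0 ≤ (ζ₀' * (conj ζ₀ - conj z)).im := by
        apply hW
        exact subset_closure ⟨q, hq, hzdef⟩
      have hkey : (conj ζ₀' * (ζ₀ - z)).im ≤ 0 := by
        have : ζ₀' * (conj ζ₀ - conj z) = conj (conj ζ₀' * (ζ₀ - z)) := by
          simp [map_mul, map_sub]
        rw [this, Complex.conj_im] at hz
        linarith
      have hs2 : s = ((‖w‖^2 : ℝ) : ℂ) * (conj ζ₀' * (ζ₀ - z)) := by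
        rw [hs, hwAw]; push_cast; ring
      rw [hs2]
      simp only [Complex.mul_im, Complex.ofReal_re, Complex.ofReal_im, zero_mul, add_zero]
      exact mul_nonpos_of_nonneg_of_nonpos (sq_nonneg _) hkey
  refine ⟨?_, by simp⟩
  simp only [Complex.ofReal_re]
  exact div_nonneg (by linarith) Real.pi_pos.le
end

section
/- Let μ(s) be a continuous family of positive semidefinite bounded self-adjoint operators on a Hilbert space for s in [a, b], and let f : [a, b] → C be continuous. Then ‖∫_a^b f(s) μ(s) ds‖ ≤ (max_{s∈[a,b]} |f(s)|) · ‖∫_a^b μ(s) ds‖. -/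
open scoped InnerProductSpace

lemma two_mul_abs_inner_le_aux {H : Type*} [NormedAddCommGroup H] [InnerProductSpace ℂ H]
    (p : H →L[ℂ] H) (hsym : ∀ u v : H, ⟪p u, v⟫_ℂ = ⟪u, p v⟫_ℂ)
    (hpos : ∀ v : H, 0 ≤ (⟪p v, v⟫_ℂ).re) (x y : H) :
    2 * ‖⟪x, p y⟫_ℂ‖ ≤ (⟪p x, x⟫_ℂ).re + (⟪p y, y⟫_ℂ).re := by
  set z : ℂ := ⟪x, p y⟫_ℂ with hz
  rcases eq_or_ne z 0 with h0 | h0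
  · rw [h0]
    simpa using add_nonneg (hpos x) (hpos y)
  · set r : ℝ := ‖z‖ with hr
    have hrpos : 0 < r := by simpa [hr] using (norm_pos_iff.mpr h0)
    have hv := hpos ((r : ℂ) • x - (starRingEnd ℂ) z • y)
    have h1 : ⟪p x, y⟫_ℂ = z := by rw [hsym x y]
    have h2 : ⟪p y, x⟫_ℂ = (starRingEnd ℂ) z := by
      rw [← inner_conj_symm]
    have hp2 : ((r : ℂ)) ^ 2 = ((r ^ 2 : ℝ) : ℂ) := by push_cast; ring
    have hp3 : ((r : ℂ)) ^ 3 = ((r ^ 3 : ℝ) : ℂ) := by push_cast; ring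
    have hzz' : z * (starRingEnd ℂ) z = (r : ℂ) ^ 2 := by
      have hns : Complex.normSq z = r ^ 2 := by rw [hr, Complex.normSq_eq_norm_sq]
      rw [Complex.mul_conj, hns]
      push_cast
      ring
    have expand : ⟪p ((r : ℂ) • x - (starRingEnd ℂ) z • y),
        (r : ℂ) • x - (starRingEnd ℂ) z • y⟫_ℂ
        = (r : ℂ) ^ 2 * ⟪p x, x⟫_ℂ + (r : ℂ) ^ 2 * ⟪p y, y⟫_ℂ
          - (r : ℂ) ^ 3 - (r : ℂ) ^ 3 := by
      simp only [map_sub, map_smul, inner_sub_left, inner_sub_right, inner_smul_left,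
        inner_smul_right, h1, h2, Complex.conj_ofReal, RingHom.map_mul,
        Complex.conj_conj]
      linear_combination (⟪p y, y⟫_ℂ - 2 * (r : ℂ)) * hzz'
    rw [expand] at hv
    have hre : ((r : ℂ) ^ 2 * ⟪p x, x⟫_ℂ + (r : ℂ) ^ 2 * ⟪p y, y⟫_ℂ
          - (r : ℂ) ^ 3 - (r : ℂ) ^ 3).re
        = r ^ 2 * (⟪p x, x⟫_ℂ).re + r ^ 2 * (⟪p y, y⟫_ℂ).re - r ^ 3 - r ^ 3 := by
      rw [hp2, hp3]
      simp only [Complex.sub_re, Complex.add_re, Complex.re_ofReal_mul, Complex.ofReal_re]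
    rw [hre] at hv
    have hr2 : (0:ℝ) < r ^ 2 := pow_pos hrpos 2
    have h5 : 2 * r * r ^ 2 ≤ ((⟪p x, x⟫_ℂ).re + (⟪p y, y⟫_ℂ).re) * r ^ 2 := by
      nlinarith [hv]
    exact le_of_mul_le_mul_right h5 hr2

/-- If μ(s) is a continuous family of positive semidefinite bounded
self-adjoint operators on a Hilbert space for s ∈ [a,b] and f : [a,b] → ℂ is continuous,
then ‖∫_a^b f(s) μ(s) ds‖ ≤ (max_{s∈[a,b]} |f(s)|) ‖∫_a^b μ(s) ds‖. -/
theorem norm_integral_smul_psd_le {H : Type*} [NormedAddCommGroup H]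
    [InnerProductSpace ℂ H] [CompleteSpace H]
    (a b : ℝ) (hab : a ≤ b) (μ : ℝ → H →L[ℂ] H) (f : ℝ → ℂ)
    (hμc : ContinuousOn μ (Set.Icc a b)) (hfc : ContinuousOn f (Set.Icc a b))
    (hsa : ∀ s ∈ Set.Icc a b, ContinuousLinearMap.adjoint (μ s) = μ s)
    (hpsd : ∀ s ∈ Set.Icc a b, ∀ v : H, 0 ≤ (⟪(μ s) v, v⟫_ℂ).re) :
    ‖∫ s in a..b, f s • μ s‖ ≤
      (⨆ s : Set.Icc a b, ‖f s‖) * ‖∫ s in a..b, μ s‖ := by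
  classical
  set M : ℝ := ⨆ s : Set.Icc a b, ‖f s‖ with hM
  set T : H →L[ℂ] H := ∫ s in a..b, f s • μ s with hT
  set A : H →L[ℂ] H := ∫ s in a..b, μ s with hA
  have hne : (Set.Icc a b).Nonempty := Set.nonempty_Icc.mpr hab
  haveI : Nonempty (Set.Icc a b) := hne.to_subtype
  have hbdd : BddAbove (Set.range fun s : Set.Icc a b => ‖f s‖) := by
    have : Set.range (fun s : Set.Icc a b => ‖f s‖)
        = (fun s => ‖f s‖) '' Set.Icc a b := by
      rw [Set.image_eq_range]
    rw [this]
    exact (isCompact_Icc.image_of_continuousOn hfc.norm).bddAbove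
  have hMle : ∀ s ∈ Set.Icc a b, ‖f s‖ ≤ M := by
    intro s hs
    exact le_ciSup hbdd (⟨s, hs⟩ : Set.Icc a b)
  have hM0 : 0 ≤ M :=
    le_trans (norm_nonneg _) (hMle _ hne.some_mem)
  -- integrability
  have huIcc : Set.uIcc a b = Set.Icc a b := Set.uIcc_of_le hab
  have hμint : IntervalIntegrable μ MeasureTheory.volume a b :=
    (huIcc ▸ hμc).intervalIntegrable
  have hfμc : ContinuousOn (fun s => f s • μ s) (Set.Icc a b) := hfc.smul hμc
  have hfμint : IntervalIntegrable (fun s => f s • μ s) MeasureTheory.volume a b :=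
    (huIcc ▸ hfμc).intervalIntegrable
  -- key bound on unit vectors
  have key : ∀ x y : H, ‖x‖ = 1 → ‖y‖ = 1 → ‖⟪x, T y⟫_ℂ‖ ≤ M * ‖A‖ := by
    intro x y hx hy
    -- CLM sending an operator S to ⟪x, S y⟫
    let ψ : (H →L[ℂ] H) →L[ℂ] ℂ :=
      (innerSL ℂ x).comp (ContinuousLinearMap.apply ℂ H y)
    have hψ : ∀ S : H →L[ℂ] H, ψ S = ⟪x, S y⟫_ℂ := fun S => rfl
    -- real CLM sending S to (⟪w, S w⟫).re
    let φ : H → (H →L[ℂ] H) →L[ℝ] ℝ := fun w =>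
      Complex.reCLM.comp
        (((innerSL ℂ w).comp (ContinuousLinearMap.apply ℂ H w)).restrictScalars ℝ)
    have hφ : ∀ w, ∀ S : H →L[ℂ] H, φ w S = (⟪w, S w⟫_ℂ).re := fun w S => rfl
    have hψT : ⟪x, T y⟫_ℂ = ∫ s in a..b, f s * ⟪x, (μ s) y⟫_ℂ := by
      have h := ψ.intervalIntegral_comp_comm hfμint
      calc ⟪x, T y⟫_ℂ = ψ T := rfl
        _ = ∫ s in a..b, ψ (f s • μ s) := by rw [hT]; exact h.symm
        _ = ∫ s in a..b, f s * ⟪x, (μ s) y⟫_ℂ := by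
            congr 1
            ext s
            rw [map_smul]
            rw [hψ]
            simp
    have hφint : ∀ w : H, (∫ s in a..b, (⟪w, (μ s) w⟫_ℂ).re) = (⟪w, A w⟫_ℂ).re := by
      intro w
      have := (φ w).intervalIntegral_comp_comm hμint
      simpa [hφ] using this
    -- pointwise bound
    have hpt : ∀ s ∈ Set.Icc a b,
        ‖f s * ⟪x, (μ s) y⟫_ℂ‖
          ≤ M * (((⟪x, (μ s) x⟫_ℂ).re + (⟪y, (μ s) y⟫_ℂ).re) / 2) := by
      intro s hs
      have hsym : ∀ u v : H, ⟪(μ s) u, v⟫_ℂ = ⟪u, (μ s) v⟫_ℂ := by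
        intro u v
        conv_lhs => rw [← hsa s hs]
        exact ContinuousLinearMap.adjoint_inner_left _ _ _
      have haux := two_mul_abs_inner_le_aux (μ s) hsym (hpsd s hs) x y
      have hrw : ∀ w : H, (⟪(μ s) w, w⟫_ℂ).re = (⟪w, (μ s) w⟫_ℂ).re := by
        intro w
        have h := inner_conj_symm (𝕜 := ℂ) w ((μ s) w)
        rw [← h, Complex.conj_re]
      rw [hrw x, hrw y] at haux
      have h1 : ‖f s * ⟪x, (μ s) y⟫_ℂ‖ = ‖f s‖ * ‖⟪x, (μ s) y⟫_ℂ‖ := by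
        simp
      rw [h1]
      have h2 : ‖⟪x, (μ s) y⟫_ℂ‖
          ≤ ((⟪x, (μ s) x⟫_ℂ).re + (⟪y, (μ s) y⟫_ℂ).re) / 2 := by linarith
      exact mul_le_mul (hMle s hs) h2 (norm_nonneg _)
        hM0
    have hg : ∀ w : H, ContinuousOn (fun s => (⟪w, (μ s) w⟫_ℂ).re) (Set.Icc a b) := by
      intro w
      exact (Complex.continuous_re.comp (innerSL ℂ w).continuous).comp_continuousOn
        (hμc.clm_apply continuousOn_const)
    have hgint : ∀ w : H,
        IntervalIntegrable (fun s => (⟪w, (μ s) w⟫_ℂ).re) MeasureTheory.volume a b :=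
      fun w => (huIcc ▸ hg w).intervalIntegrable
    have hnint : IntervalIntegrable (fun s => ‖f s * ⟪x, (μ s) y⟫_ℂ‖)
        MeasureTheory.volume a b := by
      apply ContinuousOn.intervalIntegrable
      rw [huIcc]
      exact (hfc.mul ((innerSL ℂ x).continuous.comp_continuousOn
        (hμc.clm_apply continuousOn_const))).norm
    calc ‖⟪x, T y⟫_ℂ‖
        = ‖∫ s in a..b, f s * ⟪x, (μ s) y⟫_ℂ‖ := by
          rw [hψT]
      _ ≤ ∫ s in a..b, ‖f s * ⟪x, (μ s) y⟫_ℂ‖ :=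
          intervalIntegral.norm_integral_le_integral_norm hab
      _ ≤ ∫ s in a..b, M * (((⟪x, (μ s) x⟫_ℂ).re + (⟪y, (μ s) y⟫_ℂ).re) / 2) := by
          apply intervalIntegral.integral_mono_on hab hnint
          · exact (((hgint x).add (hgint y)).div_const 2).const_mul M
          · exact hpt
      _ = M * (((⟪x, A x⟫_ℂ).re + (⟪y, A y⟫_ℂ).re) / 2) := by
          rw [intervalIntegral.integral_const_mul]
          congr 1
          rw [intervalIntegral.integral_div]
          congr 1
          rw [intervalIntegral.integral_add (hgint x) (hgint y), hφint x, hφint y]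
      _ ≤ M * ‖A‖ := by
          have hb : ∀ w : H, ‖w‖ = 1 → (⟪w, A w⟫_ℂ).re ≤ ‖A‖ := by
            intro w hw
            calc (⟪w, A w⟫_ℂ).re ≤ ‖⟪w, A w⟫_ℂ‖ := Complex.re_le_norm _
              _ ≤ ‖w‖ * ‖A w‖ := by
                  exact norm_inner_le_norm _ _
              _ ≤ ‖A‖ := by
                  rw [hw, one_mul]
                  have h := A.le_opNorm w
                  rwa [hw, mul_one] at h
          have := hb x hx
          have := hb y hy
          have h2 : ((⟪x, A x⟫_ℂ).re + (⟪y, A y⟫_ℂ).re) / 2 ≤ ‖A‖ := by linarith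
          exact mul_le_mul_of_nonneg_left h2 hM0
  -- conclude operator norm bound
  have hMA : 0 ≤ M * ‖A‖ := mul_nonneg hM0 (norm_nonneg _)
  refine ContinuousLinearMap.opNorm_le_bound _ hMA ?_
  intro y
  rcases eq_or_ne y 0 with rfl | hy0
  · simp
  · have hyn : ‖y‖ ≠ 0 := norm_ne_zero_iff.mpr hy0
    set u : H := ‖y‖⁻¹ • y with hu
    have hun : ‖u‖ = 1 := by
      rw [hu, norm_smul]
      simp [hyn]
    have hTy : T y = ‖y‖ • T u := by
      rw [hu, T.map_smul_of_tower, smul_smul, mul_inv_cancel₀ hyn, one_smul]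
    have hTu : ‖T u‖ ≤ M * ‖A‖ := by
      rcases eq_or_ne (T u) 0 with h0 | h0
      · rw [h0, norm_zero]; exact hMA
      · have hTn : ‖T u‖ ≠ 0 := norm_ne_zero_iff.mpr h0
        set x : H := ((‖T u‖⁻¹ : ℝ) : ℂ) • T u with hx
        have hxn : ‖x‖ = 1 := by
          rw [hx, norm_smul, Complex.norm_real, Real.norm_eq_abs,
            abs_of_nonneg (inv_nonneg.mpr (norm_nonneg _)), inv_mul_cancel₀ hTn]
        have hinner : ‖⟪x, T u⟫_ℂ‖ = ‖T u‖ := by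
          rw [hx, inner_smul_left, Complex.conj_ofReal, inner_self_eq_norm_sq_to_K]
          push_cast
          simp only [norm_mul, norm_inv, norm_pow, Complex.norm_real, Real.norm_eq_abs,
            abs_of_nonneg (norm_nonneg (T u))]
          field_simp
          simp
        have := key x u hxn hun
        rw [hinner] at this
        exact this
    calc ‖T y‖ = ‖y‖ * ‖T u‖ := by rw [hTy, norm_smul, Real.norm_eq_abs, abs_of_nonneg (norm_nonneg y)]
      _ ≤ ‖y‖ * (M * ‖A‖) := mul_le_mul_of_nonneg_left hTu (norm_nonneg y)
      _ = M * ‖A‖ * ‖y‖ := by ring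
end

section
/- If a disk of radius r centered at ξ lies entirely in the interior of a compact convex set Ω₀, and ζ₀ is a point on the boundary of Ω₀, then the total variation of the argument of ζ(s) − ζ₀ as ζ(s) traverses the circle of radius r about ξ equals 4 arcsin(r/|ζ₀ − ξ|), which is strictly less than 2π. -/
open Real Set intervalIntegral

lemma denom_pos {ρ : ℝ} (hρ : 1 < ρ) (u : ℝ) : 0 < 1 + ρ^2 - 2*ρ*Real.cos u := by
  nlinarith [Real.neg_one_le_cos u, Real.cos_le_one u, sq_nonneg (Real.cos u - ρ),
    Real.sin_sq_add_cos_sq u]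

lemma cos_sub_lt {ρ : ℝ} (hρ : 1 < ρ) (u : ℝ) : Real.cos u - ρ < 0 := by
  nlinarith [Real.cos_le_one u]

lemma hasDerivA {ρ : ℝ} (hρ : 1 < ρ) (u : ℝ) :
    HasDerivAt (fun u => Real.arctan (Real.sin u / (Real.cos u - ρ)))
      ((1 - ρ * Real.cos u) / (1 + ρ^2 - 2*ρ*Real.cos u)) u := by
  have hD : Real.cos u - ρ ≠ 0 := (cos_sub_lt hρ u).ne
  have hs := Real.sin_sq_add_cos_sq u
  have h1 : HasDerivAt (fun u => Real.sin u / (Real.cos u - ρ))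
      ((Real.cos u * (Real.cos u - ρ) - Real.sin u * (-Real.sin u)) / (Real.cos u - ρ)^2) u :=
    (Real.hasDerivAt_sin u).div ((Real.hasDerivAt_cos u).sub_const ρ) hD
  have h2 := (Real.hasDerivAt_arctan (Real.sin u / (Real.cos u - ρ))).comp u h1
  have e1 : Real.cos u * (Real.cos u - ρ) - Real.sin u * (-Real.sin u) = 1 - ρ * Real.cos u := by
    linear_combination hs
  have e2 : (Real.cos u - ρ)^2 * (1 + (Real.sin u/(Real.cos u - ρ))^2)
      = 1 + ρ^2 - 2*ρ*Real.cos u := by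
    field_simp
    linear_combination hs
  have h1q : (0:ℝ) < 1 + (Real.sin u/(Real.cos u - ρ))^2 := by positivity
  refine HasDerivAt.congr_deriv h2 ?_
  rw [e1, ← e2]
  field_simp

lemma contg {ρ : ℝ} (hρ : 1 < ρ) :
    Continuous (fun u => |(1 - ρ * Real.cos u) / (1 + ρ^2 - 2*ρ*Real.cos u)|) := by
  apply Continuous.abs
  exact (continuous_const.sub (continuous_const.mul Real.continuous_cos)).div
    ((continuous_const.sub (continuous_const.mul Real.continuous_cos)))
    (fun u => (denom_pos hρ u).ne')

lemma core_integral {ρ : ℝ} (hρ : 1 < ρ) (φ : ℝ) :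
    (∫ θ in (0:ℝ)..(2*Real.pi),
      |(1 - ρ * Real.cos (θ - φ)) / (1 + ρ^2 - 2*ρ*Real.cos (θ - φ))|)
      = 4 * Real.arcsin (1/ρ) := by
  set g : ℝ → ℝ := fun u => |(1 - ρ * Real.cos u) / (1 + ρ^2 - 2*ρ*Real.cos u)| with hg
  have hgc : Continuous g := contg hρ
  have hper : Function.Periodic g (2*Real.pi) := by
    intro u; simp only [hg, Real.cos_add_two_pi]
  set u₀ := Real.arccos (1/ρ) with hu₀
  have hρ0 : (0:ℝ) < ρ := by linarith
  have hx1 : (1:ℝ)/ρ < 1 := by rw [div_lt_one hρ0]; exact hρ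
  have hx0 : (0:ℝ) < 1/ρ := by positivity
  have hu₀pi : u₀ ≤ Real.pi := Real.arccos_le_pi _
  have hu₀0 : 0 ≤ u₀ := Real.arccos_nonneg _
  have hcosu₀ : Real.cos u₀ = 1/ρ := Real.cos_arccos (by linarith) hx1.le
  have hsinu₀ : Real.sin u₀ = Real.sqrt (1 - (1/ρ)^2) := Real.sin_arccos _
  -- step 1: shift φ away
  have step1 : (∫ θ in (0:ℝ)..(2*Real.pi), g (θ - φ)) = ∫ θ in u₀..(u₀ + 2*Real.pi), g θ := by
    rw [intervalIntegral.integral_comp_sub_right g φ]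
    have := hper.intervalIntegral_add_eq (0 - φ) u₀
    rw [zero_sub, ← this]
    norm_num [sub_eq_add_neg, add_comm]
  have conth : Continuous (fun u => (1 - ρ * Real.cos u) / (1 + ρ^2 - 2*ρ*Real.cos u)) :=
    (continuous_const.sub (continuous_const.mul Real.continuous_cos)).div
      ((continuous_const.sub (continuous_const.mul Real.continuous_cos)))
      (fun u => (denom_pos hρ u).ne')
  set h : ℝ → ℝ := fun u => (1 - ρ * Real.cos u) / (1 + ρ^2 - 2*ρ*Real.cos u) with hh
  have hint : ∀ a b : ℝ, IntervalIntegrable g MeasureTheory.volume a b :=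
    fun a b => hgc.intervalIntegrable a b
  have hinth : ∀ a b : ℝ, IntervalIntegrable h MeasureTheory.volume a b :=
    fun a b => conth.intervalIntegrable a b
  have hπ := Real.pi_pos
  -- arctan values
  have hs : (0:ℝ) < 1 - (1/ρ)^2 := by nlinarith
  have harg : ∀ t : ℝ, 0 < t → t^2 = 1-(1/ρ)^2 → t/(1/ρ-ρ) = -(1/ρ / t) := by
    intro t ht h2
    have hd : (1:ℝ)/ρ - ρ ≠ 0 := by intro hc; nlinarith
    have hd2 : 1 - ρ*ρ ≠ 0 := by intro hc; nlinarith
    field_simp [hd2]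
    have h3 : t^2 * ρ^2 = ρ^2 - 1 := by
      rw [h2]; field_simp
    rw [h3, div_eq_iff (by rw [sq]; exact hd2)]; ring
  have valA : Real.arctan (Real.sin u₀ / (Real.cos u₀ - ρ)) = -Real.arcsin (1/ρ) := by
    rw [hsinu₀, hcosu₀, Real.arcsin_eq_arctan ⟨by linarith, hx1⟩, ← Real.arctan_neg]
    congr 1
    exact harg _ (Real.sqrt_pos.mpr hs) (Real.sq_sqrt hs.le)
  have numpos : ∀ u : ℝ, Real.cos u ≤ 1/ρ → 0 ≤ 1 - ρ * Real.cos u := by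
    intro u hcos
    have h1 : ρ * Real.cos u ≤ ρ * (1/ρ) := mul_le_mul_of_nonneg_left hcos hρ0.le
    rw [mul_one_div_cancel hρ0.ne'] at h1
    linarith
  have numneg : ∀ u : ℝ, 1/ρ ≤ Real.cos u → 1 - ρ * Real.cos u ≤ 0 := by
    intro u hcos
    have h1 : ρ * (1/ρ) ≤ ρ * Real.cos u := mul_le_mul_of_nonneg_left hcos hρ0.le
    rw [mul_one_div_cancel hρ0.ne'] at h1
    linarith
  -- piece 1
  have piece1 : (∫ θ in u₀..(2*Real.pi - u₀), g θ) = 2 * Real.arcsin (1/ρ) := by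
    have hle : u₀ ≤ 2*Real.pi - u₀ := by linarith
    have heq : Set.EqOn g h (Set.uIcc u₀ (2*Real.pi - u₀)) := by
      intro u hu
      rw [Set.uIcc_of_le hle] at hu
      have hcos : Real.cos u ≤ 1/ρ := by
        rcases le_total u Real.pi with h'|h'
        · rw [← hcosu₀]
          exact Real.cos_le_cos_of_nonneg_of_le_pi hu₀0 h' hu.1
        · rw [← Real.cos_two_pi_sub u, ← hcosu₀]
          exact Real.cos_le_cos_of_nonneg_of_le_pi hu₀0 (by linarith) (by linarith [hu.2])
      have : 0 ≤ h u := div_nonneg (numpos u hcos) (denom_pos hρ u).le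
      simpa [hg, hh] using abs_of_nonneg this
    rw [intervalIntegral.integral_congr heq,
      intervalIntegral.integral_eq_sub_of_hasDerivAt (fun x _ => hasDerivA hρ x) (hinth _ _)]
    simp only [Real.sin_two_pi_sub, Real.cos_two_pi_sub, neg_div, Real.arctan_neg]
    rw [valA]; ring
  -- piece 2
  have piece2 : (∫ θ in (2*Real.pi - u₀)..(u₀ + 2*Real.pi), g θ) = 2 * Real.arcsin (1/ρ) := by
    have hle : 2*Real.pi - u₀ ≤ u₀ + 2*Real.pi := by linarith
    have heq : Set.EqOn g (fun u => -(h u)) (Set.uIcc (2*Real.pi - u₀) (u₀ + 2*Real.pi)) := by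
      intro u hu
      rw [Set.uIcc_of_le hle] at hu
      have hcos : 1/ρ ≤ Real.cos u := by
        rw [← Real.cos_sub_two_pi u, ← Real.cos_abs, ← hcosu₀]
        exact Real.cos_le_cos_of_nonneg_of_le_pi (abs_nonneg _) hu₀pi
          (abs_le.mpr ⟨by linarith [hu.1], by linarith [hu.2]⟩)
      have : h u ≤ 0 := div_nonpos_of_nonpos_of_nonneg (numneg u hcos) (denom_pos hρ u).le
      simpa [hg, hh] using abs_of_nonpos this
    rw [intervalIntegral.integral_congr heq, intervalIntegral.integral_neg,
      intervalIntegral.integral_eq_sub_of_hasDerivAt (fun x _ => hasDerivA hρ x) (hinth _ _)]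
    simp only [Real.sin_add_two_pi, Real.cos_add_two_pi, Real.sin_two_pi_sub,
      Real.cos_two_pi_sub, neg_div, Real.arctan_neg]
    rw [valA]; ring
  calc (∫ θ in (0:ℝ)..(2*Real.pi),
      |(1 - ρ * Real.cos (θ - φ)) / (1 + ρ^2 - 2*ρ*Real.cos (θ - φ))|)
      = ∫ θ in u₀..(u₀ + 2*Real.pi), g θ := step1
    _ = (∫ θ in u₀..(2*Real.pi - u₀), g θ) + ∫ θ in (2*Real.pi - u₀)..(u₀ + 2*Real.pi), g θ :=
        (intervalIntegral.integral_add_adjacent_intervals (hint _ _) (hint _ _)).symm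
    _ = 4 * Real.arcsin (1/ρ) := by rw [piece1, piece2]; ring

lemma pointwise (ξ ζ₀ : ℂ) (r : ℝ) (hr : 0 < r) (hd : r < ‖ζ₀ - ξ‖) (s : ℝ) :
    |((Complex.I * Complex.exp (Complex.I * s / r)) /
        (ξ + r * Complex.exp (Complex.I * s / r) - ζ₀)).im|
    = (1/r) * |(1 - (‖ζ₀-ξ‖/r) * Real.cos (s/r - Complex.arg (ζ₀-ξ))) /
        (1 + (‖ζ₀-ξ‖/r)^2
          - 2*(‖ζ₀-ξ‖/r)*Real.cos (s/r - Complex.arg (ζ₀-ξ)))| := by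
  set d := ‖ζ₀-ξ‖ with hdd
  set φ := Complex.arg (ζ₀-ξ) with hφ
  have hd0 : 0 < d := lt_trans hr hd
  have hc0 : ζ₀ - ξ ≠ 0 := by
    intro hc
    rw [hdd, hc] at hd0
    simp at hd0
  have e1 : (ζ₀-ξ).re = d * Real.cos φ := by
    rw [hφ, Complex.cos_arg hc0, hdd]
    field_simp
  have e2 : (ζ₀-ξ).im = d * Real.sin φ := by
    rw [hφ, Complex.sin_arg, hdd]
    field_simp
  have hz1 : ζ₀.re = ξ.re + d * Real.cos φ := by
    have := e1; simp [Complex.sub_re] at this; linarith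
  have hz2 : ζ₀.im = ξ.im + d * Real.sin φ := by
    have := e2; simp [Complex.sub_im] at this; linarith
  set θ := s/r with hθ
  have hz : Complex.I * (s:ℂ) / (r:ℂ) = (θ:ℂ) * Complex.I := by
    rw [hθ]; push_cast; ring
  clear_value d φ θ
  clear e1 e2 hdd hφ hθ hc0
  rw [hz, Complex.exp_mul_I]
  have hsθ := Real.sin_sq_add_cos_sq θ
  have hsφ := Real.sin_sq_add_cos_sq φ
  have hden2 : 0 < r^2 + d^2 - 2*r*d*Real.cos (θ-φ) := by
    nlinarith [Real.cos_le_one (θ-φ), sq_nonneg (r-d), mul_pos hr hd0,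
      mul_le_mul_of_nonneg_left (Real.cos_le_one (θ-φ)) (by positivity : (0:ℝ) ≤ 2*r*d)]
  have hnormSq : Complex.normSq (ξ + r * (Complex.cos θ + Complex.sin θ * Complex.I) - ζ₀)
      = r^2 + d^2 - 2*r*d*Real.cos (θ-φ) := by
    simp only [← Complex.ofReal_cos, ← Complex.ofReal_sin, Complex.normSq_apply,
      Complex.add_re, Complex.add_im, Complex.sub_re, Complex.sub_im, Complex.mul_re,
      Complex.mul_im, Complex.ofReal_re, Complex.ofReal_im, Complex.I_re, Complex.I_im]
    rw [hz1, hz2, Real.cos_sub]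
    linear_combination (r^2)*hsθ + (d^2)*hsφ
  have V : ((Complex.I * (Complex.cos θ + Complex.sin θ * Complex.I)) /
      (ξ + r * (Complex.cos θ + Complex.sin θ * Complex.I) - ζ₀)).im
      = (r - d * Real.cos (θ-φ)) / (r^2 + d^2 - 2*r*d*Real.cos (θ-φ)) := by
    rw [Complex.div_im, hnormSq, div_sub_div_same]
    congr 1
    simp only [← Complex.ofReal_cos, ← Complex.ofReal_sin, Complex.add_re, Complex.add_im,
      Complex.sub_re, Complex.sub_im, Complex.mul_re, Complex.mul_im, Complex.ofReal_re,
      Complex.ofReal_im, Complex.I_re, Complex.I_im]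
    rw [hz1, hz2, Real.cos_sub]
    linear_combination r*hsθ
  rw [V]
  have h1 : (0:ℝ) < 1 + (d/r)^2 - 2*(d/r)*Real.cos (θ-φ) := by
    have h2 : (1:ℝ) < d/r := (one_lt_div hr).mpr hd
    nlinarith [Real.cos_le_one (θ-φ), sq_nonneg (d/r - 1)]
  have key : (r - d * Real.cos (θ-φ)) / (r^2 + d^2 - 2*r*d*Real.cos (θ-φ))
      = (1/r) * ((1 - (d/r) * Real.cos (θ-φ)) / (1 + (d/r)^2 - 2*(d/r)*Real.cos (θ-φ))) := by
    have e5 : 1 - (d/r) * Real.cos (θ-φ) = (r - d * Real.cos (θ-φ))/r := by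
      field_simp
    have e6 : 1 + (d/r)^2 - 2*(d/r)*Real.cos (θ-φ)
        = (r^2 + d^2 - 2*r*d*Real.cos (θ-φ))/r^2 := by
      field_simp
    have h9 : (1 - (d/r) * Real.cos (θ-φ)) / (1 + (d/r)^2 - 2*(d/r)*Real.cos (θ-φ))
        = (r - d*Real.cos (θ-φ))*r / (r^2+d^2-2*r*d*Real.cos (θ-φ)) := by
      rw [e5, e6, div_div_div_eq, div_eq_div_iff (by positivity) hden2.ne']
      ring
    rw [h9, one_div, inv_mul_eq_div, div_div, mul_div_mul_right _ _ hr.ne']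
  rw [key, abs_mul, abs_of_pos (show (0:ℝ) < 1/r by positivity)]

/-- If the closed disk of radius r about ξ lies in the interior of a
compact convex set Ω₀ and ζ₀ ∈ ∂Ω₀, then the total variation of arg(ζ(s) − ζ₀) as
ζ(s) = ξ + r e^{is/r} traverses the circle of radius r about ξ (unit speed, so
d/ds arg(ζ(s) − ζ₀) = Im(ζ'(s)/(ζ(s) − ζ₀))) equals 4 arcsin(r/|ζ₀ − ξ|) < 2π. -/
theorem total_variation_arg_circle (Ω₀ : Set ℂ) (hconv : Convex ℝ Ω₀)
    (hcomp : IsCompact Ω₀) (ξ : ℂ) (r : ℝ) (hr : 0 < r)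
    (hdisk : Metric.closedBall ξ r ⊆ interior Ω₀) (ζ₀ : ℂ) (hζ₀ : ζ₀ ∈ frontier Ω₀) :
    (∫ s in (0 : ℝ)..(2 * Real.pi * r),
        |((Complex.I * Complex.exp (Complex.I * s / r)) /
            (ξ + r * Complex.exp (Complex.I * s / r) - ζ₀)).im|) =
      4 * Real.arcsin (r / ‖ζ₀ - ξ‖) ∧
    4 * Real.arcsin (r / ‖ζ₀ - ξ‖) < 2 * Real.pi := by
  have hδ : ζ₀ ∉ interior Ω₀ := by
    rw [← closure_diff_interior] at hζ₀
    exact hζ₀.2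
  have hdlt : r < ‖ζ₀ - ξ‖ := by
    by_contra hle
    push_neg at hle
    exact hδ (hdisk (by rw [Metric.mem_closedBall, Complex.dist_eq]; exact hle))
  set d := ‖ζ₀ - ξ‖ with hdd
  set φ := Complex.arg (ζ₀ - ξ) with hφ
  have hd0 : 0 < d := lt_trans hr hdlt
  have hρ : 1 < d/r := (one_lt_div hr).mpr hdlt
  have hlt1 : r/d < 1 := (div_lt_one hd0).mpr hdlt
  constructor
  · have hcong : Set.EqOn
        (fun s : ℝ => |((Complex.I * Complex.exp (Complex.I * s / r)) /
            (ξ + r * Complex.exp (Complex.I * s / r) - ζ₀)).im|)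
        (fun s : ℝ => (1/r) * ((fun x : ℝ =>
          |(1 - (d/r) * Real.cos (x - φ)) / (1 + (d/r)^2 - 2*(d/r)*Real.cos (x - φ))|) (s/r)))
        (Set.uIcc (0:ℝ) (2*Real.pi*r)) :=
      fun s _ => pointwise ξ ζ₀ r hr hdlt s
    rw [intervalIntegral.integral_congr hcong]
    rw [intervalIntegral.integral_const_mul]
    rw [intervalIntegral.integral_comp_div (f := fun x : ℝ =>
      |(1 - (d/r) * Real.cos (x - φ)) / (1 + (d/r)^2 - 2*(d/r)*Real.cos (x - φ))|) hr.ne']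
    rw [zero_div, mul_div_assoc, div_self hr.ne', mul_one]
    rw [core_integral hρ φ, smul_eq_mul, one_div_div]
    field_simp
  · have h2 := Real.arcsin_lt_pi_div_two.mpr hlt1
    linarith [Real.pi_pos]
end
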